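/- Let R be a commutative ring with total ring of fractions F(R). Suppose X is a matrix over F(R) admitting two right-fraction representations X = A₁ b₁⁻¹ = A₂ B₂⁻¹ where A₁, A₂ are matrices over R, b₁ ∈ R is a nonzerodivisor, and B₂ is a square matrix over R whose determinant is a nonzerodivisor. Then the R-module generated by the rows of the stacked matrix [A₁ᵗ, (b₁E)ᵗ]ᵗ is isomorphic to the R-module generated by the rows of [A₂ᵗ, B₂ᵗ]ᵗ. -/

import Mathlib

open Matrix

private theorem stmt_0_aux {R : Type*} [CommRing R] {n m : ℕ} (K : Type*) [CommRing K]
    [Algebra R K] [IsLocalization (nonZeroDivisors R) K]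
    (X : Matrix (Fin n) (Fin m) K)
    (A₁ A₂ : Matrix (Fin n) (Fin m) R) (b₁ : R) (B₂ : Matrix (Fin m) (Fin m) R)
    (hb₁ : b₁ ∈ nonZeroDivisors R) (hB₂ : B₂.det ∈ nonZeroDivisors R)
    (h1 : X * ((algebraMap R K b₁) • (1 : Matrix (Fin m) (Fin m) K))
      = A₁.map (algebraMap R K))
    (h2 : X * B₂.map (algebraMap R K) = A₂.map (algebraMap R K)) :
    Nonempty
      ((Submodule.span R
          (Set.range fun i => Matrix.fromRows A₁ (b₁ • (1 : Matrix (Fin m) (Fin m) R)) i)) ≃ₗ[R]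
        (Submodule.span R (Set.range fun i => Matrix.fromRows A₂ B₂ i))) := by
  set alg := algebraMap R K with halg
  have hu : IsUnit (alg b₁) := IsLocalization.map_units K ⟨b₁, hb₁⟩
  have hd : IsUnit ((B₂.map alg).det) := by
    rw [← RingHom.mapMatrix_apply, ← RingHom.map_det]
    exact IsLocalization.map_units K ⟨B₂.det, hB₂⟩
  set C : Matrix (Fin m) (Fin m) K := (↑hu.unit⁻¹ : K) • B₂.map alg with hC
  have hCdet : IsUnit C.det := by
    rw [hC, det_smul]
    simpa using (hu.unit⁻¹.isUnit.pow (Fintype.card (Fin m))).mul hd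
  -- the linear equivalence v ↦ v ᵥ* C
  let e : (Fin m → K) ≃ₗ[K] (Fin m → K) :=
  { toFun := fun v => v ᵥ* C
    invFun := fun v => v ᵥ* C⁻¹
    map_add' := fun u v => Matrix.add_vecMul C u v
    map_smul' := fun c v => by simp [vecMul_smul, smul_vecMul]
    left_inv := fun v => by
      show (v ᵥ* C) ᵥ* C⁻¹ = v
      rw [vecMul_vecMul, mul_nonsing_inv _ hCdet, vecMul_one]
    right_inv := fun v => by
      show (v ᵥ* C⁻¹) ᵥ* C = v
      rw [vecMul_vecMul, nonsing_inv_mul _ hCdet, vecMul_one] }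
  let e' : (Fin m → K) ≃ₗ[R] (Fin m → K) := e.restrictScalars R
  -- embedding of R^m into K^m
  let φ : (Fin m → R) →ₗ[R] (Fin m → K) :=
    LinearMap.pi fun j => (Algebra.linearMap R K).comp (LinearMap.proj j)
  have hφ : Function.Injective φ := by
    intro u v huv
    funext j
    exact IsFractionRing.injective R K (congrFun huv j)
  have hφ_apply : ∀ {ι : Type} (M : Matrix ι (Fin m) R) (i : ι),
      φ (M i) = (M.map alg) i := fun M i => rfl
  -- the key matrix identity
  have key : (fromRows A₁ (b₁ • (1 : Matrix (Fin m) (Fin m) R))).map alg * C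
      = (fromRows A₂ B₂).map alg := by
    have hmap : ∀ (M₁ : Matrix (Fin n) (Fin m) R) (M₂ : Matrix (Fin m) (Fin m) R),
        (fromRows M₁ M₂).map alg = fromRows (M₁.map alg) (M₂.map alg) := by
      intro M₁ M₂; ext i j; cases i <;> rfl
    have hsm : (b₁ • (1 : Matrix (Fin m) (Fin m) R)).map alg
        = alg b₁ • (1 : Matrix (Fin m) (Fin m) K) := by
      ext i j
      by_cases h : i = j <;> simp [Matrix.map_apply, Matrix.one_apply, h]
    have hA1 : A₁.map alg = alg b₁ • X := by
      rw [← h1, Matrix.mul_smul, Matrix.mul_one]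
    have hblock1 : (A₁.map alg) * C = A₂.map alg := by
      rw [hA1, hC, Matrix.smul_mul, Matrix.mul_smul, smul_smul, IsUnit.mul_val_inv,
        one_smul, h2]
    have hblock2 : (alg b₁ • (1 : Matrix (Fin m) (Fin m) K)) * C = B₂.map alg := by
      rw [hC, Matrix.smul_mul, Matrix.one_mul, smul_smul, IsUnit.mul_val_inv, one_smul]
    rw [hmap, hmap, fromRows_mul, hsm, hblock1, hblock2]
  -- rows transform correctly
  have hrow : ∀ i, e' (φ (fromRows A₁ (b₁ • (1 : Matrix (Fin m) (Fin m) R)) i))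
      = φ (fromRows A₂ B₂ i) := by
    intro i
    rw [hφ_apply, hφ_apply]
    show ((fromRows A₁ (b₁ • (1 : Matrix (Fin m) (Fin m) R))).map alg) i ᵥ* C
      = ((fromRows A₂ B₂).map alg) i
    rw [← key]
    funext j
    simp [Matrix.mul_apply, Matrix.vecMul, dotProduct]
  set p₁ := Submodule.span R
      (Set.range fun i => Matrix.fromRows A₁ (b₁ • (1 : Matrix (Fin m) (Fin m) R)) i) with hp₁
  set p₂ := Submodule.span R (Set.range fun i => Matrix.fromRows A₂ B₂ i) with hp₂
  have hmap₁ : (p₁.map φ).map (e' : (Fin m → K) →ₗ[R] (Fin m → K)) = p₂.map φ := by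
    rw [hp₁, hp₂, Submodule.map_span, Submodule.map_span, Submodule.map_span,
      ← Set.range_comp, ← Set.range_comp, ← Set.range_comp]
    exact congrArg _ (congrArg Set.range (funext hrow))
  exact ⟨(Submodule.equivMapOfInjective φ hφ p₁).trans
    ((e'.submoduleMap (p₁.map φ)).trans
      ((LinearEquiv.ofEq _ _ hmap₁).trans
        (Submodule.equivMapOfInjective φ hφ p₂).symm))⟩

theorem stmt_0 {R : Type*} [CommRing R] {n m : ℕ}
    (X : Matrix (Fin n) (Fin m) (FractionRing R))
    (A₁ A₂ : Matrix (Fin n) (Fin m) R) (b₁ : R) (B₂ : Matrix (Fin m) (Fin m) R)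
    (hb₁ : b₁ ∈ nonZeroDivisors R) (hB₂ : B₂.det ∈ nonZeroDivisors R)
    (h1 : X * ((algebraMap R (FractionRing R) b₁) •
        (1 : Matrix (Fin m) (Fin m) (FractionRing R)))
      = A₁.map (algebraMap R (FractionRing R)))
    (h2 : X * B₂.map (algebraMap R (FractionRing R))
      = A₂.map (algebraMap R (FractionRing R))) :
    Nonempty
      ((Submodule.span R
          (Set.range fun i => Matrix.fromRows A₁ (b₁ • (1 : Matrix (Fin m) (Fin m) R)) i)) ≃ₗ[R]
        (Submodule.span R (Set.range fun i => Matrix.fromRows A₂ B₂ i))) :=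
  stmt_0_aux (FractionRing R) X A₁ A₂ b₁ B₂ hb₁ hB₂ h1 h2
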